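/- arXiv:1805.07183 — 3 statements merged into one kernel-verified Lean document; each statement's English description precedes it below -/
import Mathlib

section
/- Let L be the covector set of an oriented matroid without loops on a finite set E, let R ∈ T, e ∈ E, and let P be a tope with P_e = −R_e. Let C be a tope with C_e = −R_e and Sep(R,C) ⊊ Sep(R,P), and suppose X ∈ L satisfies [C,P]_R = star(X). Then z(X) := {f ∈ E : X_f = 0} equals Sep(C,P), and X ∈ W_{R,e}(P). Moreover, if C' is another tope with C'_e = −R_e, Sep(R,C') ⊊ Sep(R,P), and [C',P]_R = star(X') for some X' ∈ L, and if C ⪯_R C', then X ≤ X' in the componentwise order on covectors. -/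
open Finset

/-- Sign vectors on ground set `E`. -/
abbrev SignVec (E : Type*) := E → SignType

namespace SignVec

/-- The componentwise partial order on sign vectors generated by `0 < +` and `0 < -`. -/
def le {E : Type*} (X Y : SignVec E) : Prop := ∀ e, X e = 0 ∨ X e = Y e

/-- Composition of sign vectors. -/
def comp {E : Type*} (X Y : SignVec E) : SignVec E := fun e => if X e = 0 then Y e else X e

end SignVec

/-- The covector axioms for an oriented matroid given by its set of covectors. -/
structure IsOrientedMatroid {E : Type*} (L : Set (SignVec E)) : Prop where
  zero_mem : (0 : SignVec E) ∈ L
  neg_mem : ∀ X ∈ L, (-X) ∈ L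
  comp_mem : ∀ X ∈ L, ∀ Y ∈ L, SignVec.comp X Y ∈ L
  elim : ∀ X ∈ L, ∀ Y ∈ L, ∀ e, X e = -Y e → X e ≠ 0 →
    ∃ Z ∈ L, Z e = 0 ∧ ∀ f, ¬(X f = -Y f ∧ X f ≠ 0) → Z f = SignVec.comp X Y f

/-- The set of topes (maximal covectors) of `L`. -/
def Topes {E : Type*} (L : Set (SignVec E)) : Set (SignVec E) :=
  {T | T ∈ L ∧ ∀ X ∈ L, SignVec.le T X → X = T}

/-- `L` has no loops: every tope is nowhere zero. -/
def Loopless {E : Type*} (L : Set (SignVec E)) : Prop :=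
  ∀ T ∈ Topes L, ∀ e, T e ≠ 0

/-- The separator of two (co)vectors. -/
def sep {E : Type*} (P Q : SignVec E) : Set E := {e | P e = -Q e ∧ P e ≠ 0}

/-- The star of a covector: all topes above it. -/
def star {E : Type*} (L : Set (SignVec E)) (X : SignVec E) : Set (SignVec E) :=
  {T ∈ Topes L | SignVec.le X T}

/-- The closed interval `[Q,P]_R` in the tope poset with base tope `R`. -/
def intervalR {E : Type*} (L : Set (SignVec E)) (R Q P : SignVec E) : Set (SignVec E) :=
  {T ∈ Topes L | sep R Q ⊆ sep R T ∧ sep R T ⊆ sep R P}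

/-- The open interval `(0̂, P)_{R,e}` in `T_{R,e}`. -/
def openInt {E : Type*} (L : Set (SignVec E)) (R : SignVec E) (e : E) (P : SignVec E) :
    Set (SignVec E) :=
  {Q ∈ Topes L | Q e = -R e ∧ sep R Q ⊂ sep R P}

/-- The subposet `(0̂,P)^△_{R,e}` of `(0̂,P)_{R,e}`. -/
def openIntTri {E : Type*} (L : Set (SignVec E)) (R : SignVec E) (e : E) (P : SignVec E) :
    Set (SignVec E) :=
  {Q ∈ openInt L R e P | ∃ X ∈ L, intervalR L R Q P = star L X}

/-- Ordering a set of topes by `P ⪯_R Q ↔ Sep(R,P) ⊆ Sep(R,Q)`. -/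
def sepPreorder {E : Type*} (R : SignVec E) (S : Set (SignVec E)) : Preorder S where
  le P Q := sep R P.1 ⊆ sep R Q.1
  lt P Q := sep R P.1 ⊆ sep R Q.1 ∧ ¬ sep R Q.1 ⊆ sep R P.1
  le_refl _ := subset_rfl
  le_trans _ _ _ h₁ h₂ := fun _ hx => h₂ (h₁ hx)
  lt_iff_le_not_ge _ _ := Iff.rfl

/-- Ordering a set of covectors by the componentwise order on sign vectors. -/
def covPreorder {E : Type*} (S : Set (SignVec E)) : Preorder S where
  le X Y := SignVec.le X.1 Y.1
  lt X Y := SignVec.le X.1 Y.1 ∧ ¬ SignVec.le Y.1 X.1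
  le_refl _ := fun _ => Or.inr rfl
  le_trans X Y Z h₁ h₂ := fun e => by
    rcases h₁ e with h | h
    · exact Or.inl h
    · rcases h₂ e with h' | h'
      · exact Or.inl (h.trans h')
      · exact Or.inr (h.trans h')
  lt_iff_le_not_ge _ _ := Iff.rfl

open CategoryTheory in
/-- The geometric realization of the order complex of a poset, realized as the topological
realization of the nerve of the poset viewed as a category. -/
noncomputable def posetRealization (α : Type) [Preorder α] : TopCat :=
  SSet.toTop.obj (nerve α)

/-- The monomial `∏_{e ∈ Sep(P,Q)} U_e`, the `(P,Q)` entry of the Varchenko matrix. -/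
noncomputable def vchEntry {E : Type*} [Fintype E] (K : Type*) [Field K] (P Q : SignVec E) :
    MvPolynomial E K :=
  ∏ e ∈ Finset.univ.filter fun e => P e = -Q e ∧ P e ≠ 0, MvPolynomial.X e

/-- The Varchenko matrix of `L`, with rows and columns indexed by the topes of `L`. -/
noncomputable def varchenko {E : Type*} [Fintype E] (K : Type*) [Field K]
    (L : Set (SignVec E)) : Matrix ↥(Topes L) ↥(Topes L) (MvPolynomial E K) :=
  Matrix.of fun P Q => vchEntry K P.1 Q.1

/-- `a(F) = ∏_{e : F_e = 0} U_e`. -/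
noncomputable def aF {E : Type*} [Fintype E] (K : Type*) [Field K] (F : SignVec E) :
    MvPolynomial E K :=
  ∏ e ∈ Finset.univ.filter fun e => F e = 0, MvPolynomial.X e

/-- `T^{F,e}`: the topes `P` such that `F` is the greatest covector `G ∈ L` with
`G ≤ P` and `G e = 0`. -/
def TFe {E : Type*} (L : Set (SignVec E)) (F : SignVec E) (e : E) : Set (SignVec E) :=
  {P ∈ Topes L | F ∈ L ∧ SignVec.le F P ∧ F e = 0 ∧
    ∀ G ∈ L, SignVec.le G P → G e = 0 → SignVec.le G F}

/-- The poset `W_{R,e}(P)`. -/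
def Wset {E : Type*} (L : Set (SignVec E)) (R : SignVec E) (e : E) (P : SignVec E) :
    Set (SignVec E) :=
  {F ∈ L | F ≠ 0 ∧ SignVec.le F P ∧ F ≠ P ∧ F e = -R e ∧
    (∀ f, f ∉ sep P R → F f = P f) ∧ ∀ f ∈ sep P R, f ≠ e → F f = 0 ∨ F f = P f}

open scoped Classical in
/-- `μ` is, for every base tope `B` of `L`, the Möbius function `μ(0̂, ·)` of the poset
`T_{B,e}` (computed in its incidence algebra over `ℤ`): it satisfies the defining
recursion `∑_{0̂ ≤ z ≤ Q} μ(0̂,z) = 0` for every `Q > 0̂`, where `μ(0̂,0̂) = 1`. -/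
def IsMoebius {E : Type*} [Fintype E] (L : Set (SignVec E)) (e : E)
    (μ : SignVec E → SignVec E → ℤ) : Prop :=
  ∀ B ∈ Topes L, ∀ Q ∈ Topes L, Q e = -B e →
    1 + ∑ Q' ∈ Finset.univ.filter
      (fun Q' : SignVec E => Q' ∈ Topes L ∧ Q' e = -B e ∧ sep B Q' ⊆ sep B Q), μ Q' B = 0

/-- `L` is graded of rank `r`: every maximal chain of covectors (necessarily running from
the zero covector to a tope) has length `r`, i.e. `r+1` elements. -/
def GradedOfRank {α : Type*} (L : Set (SignVec α)) (r : ℕ) : Prop :=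
  ∀ c : Finset (SignVec α), ↑c ⊆ L → IsChain SignVec.le (c : Set (SignVec α)) →
    (0 : SignVec α) ∈ c → (∃ T ∈ c, T ∈ Topes L) →
    (∀ d : Finset (SignVec α), ↑d ⊆ L → IsChain SignVec.le (d : Set (SignVec α)) →
      c ⊆ d → c = d) →
    c.card = r + 1

/-- The restriction `L|_A` of `L` to a subset `A` of the ground set. -/
def restrictOM {E : Type*} (L : Set (SignVec E)) (A : Set E) : Set (SignVec ↥A) :=
  (fun X (a : ↥A) => X a.1) '' L

/-- `e` is the maximal element of `Sep(P,Q)`. -/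
def maxSep {E : Type*} [LinearOrder E] (e : E) (P Q : SignVec E) : Prop :=
  e ∈ sep P Q ∧ ∀ f ∈ sep P Q, f ≤ e

open scoped Classical in
/-- The `(Q,R)` entry of the matrix `𝓜^e`. -/
noncomputable def mEntry {E : Type*} [Fintype E] [LinearOrder E] (K : Type*) [Field K]
    (μ : SignVec E → SignVec E → ℤ) (e : E) (Q R : SignVec E) : MvPolynomial E K :=
  if Q = R then 1
  else if Q e = -1 ∧ R e = 1 ∧ maxSep e Q R then
    ((-μ Q R : ℤ) : MvPolynomial E K) * vchEntry K Q R
  else if Q e = 1 ∧ R e = -1 ∧ maxSep e Q R then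
    ((-μ (-Q) (-R) : ℤ) : MvPolynomial E K) * vchEntry K Q R
  else 0

private lemma st_aux1 : ∀ a b : SignType, a ≠ 0 → b ≠ 0 → a = b ∨ a = -b := by decide

private lemma st_aux2 : ∀ a : SignType, a = -a → a = 0 := by decide

private lemma st_aux3 : ∀ a b : SignType, a = -b → b = -a := by decide

private lemma st_aux5 : ∀ a : SignType, a ≠ 0 → -a ≠ 0 := by decide

private lemma st_neg_neg : ∀ a : SignType, - -a = a := by decide

/-- Every covector lies below a tope. -/
lemma exists_tope_ge {E : Type*} [Fintype E] (L : Set (SignVec E)) (X : SignVec E)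
    (hX : X ∈ L) : ∃ T ∈ Topes L, SignVec.le X T := by
  classical
  let S : Finset (SignVec E) := Finset.univ.filter fun Y => Y ∈ L ∧ SignVec.le X Y
  have hXS : X ∈ S := by
    simp only [S, Finset.mem_filter, Finset.mem_univ, true_and]
    exact ⟨hX, fun e => Or.inr rfl⟩
  obtain ⟨T, hTS, hmax⟩ := S.exists_max_image
    (fun Y => (Finset.univ.filter fun e => Y e ≠ 0).card) ⟨X, hXS⟩
  simp only [S, Finset.mem_filter, Finset.mem_univ, true_and] at hTS
  refine ⟨T, ⟨hTS.1, ?_⟩, hTS.2⟩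
  intro Z hZ hTZ
  by_contra hne
  have hXZ : SignVec.le X Z := fun g => by
    rcases hTS.2 g with h | h
    · exact Or.inl h
    · rcases hTZ g with h' | h'
      · exact Or.inl (h.trans h')
      · exact Or.inr (h.trans h')
  have hZS : Z ∈ S := by
    simp only [S, Finset.mem_filter, Finset.mem_univ, true_and]; exact ⟨hZ, hXZ⟩
  obtain ⟨f, hf⟩ : ∃ f, Z f ≠ T f := by
    by_contra h
    push_neg at h
    exact hne (funext h)
  have hTf : T f = 0 := by
    rcases hTZ f with h | h
    · exact h
    · exact absurd h.symm hf
  have hZf : Z f ≠ 0 := fun h0 => hf (h0.trans hTf.symm)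
  have hsub : (Finset.univ.filter fun g => T g ≠ 0) ⊂ Finset.univ.filter fun g => Z g ≠ 0 := by
    rw [Finset.ssubset_iff_of_subset]
    · exact ⟨f, by simp [hZf], by simp [hTf]⟩
    · intro g hg
      simp only [Finset.mem_filter, Finset.mem_univ, true_and] at hg ⊢
      rcases hTZ g with h | h
      · exact absurd h hg
      · rw [← h]; exact hg
  exact absurd (hmax Z hZS) (not_le.2 (Finset.card_lt_card hsub))

/-- The main computation: the zero set of `X` is `Sep(C,P)` and `X ≤ P`. -/
lemma main_aux {E : Type*} [Fintype E] (L : Set (SignVec E))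
    (hOM : IsOrientedMatroid L) (hloop : Loopless L)
    (R P C X : SignVec E) (hR : R ∈ Topes L) (hP : P ∈ Topes L)
    (hC : C ∈ Topes L) (hCP : sep R C ⊂ sep R P)
    (hX : X ∈ L) (hstar : intervalR L R C P = star L X) :
    (∀ f, X f = 0 ↔ f ∈ sep C P) ∧ SignVec.le X P ∧ SignVec.le X C := by
  have hRne : ∀ f, R f ≠ 0 := hloop R hR
  have hPne : ∀ f, P f ≠ 0 := hloop P hP
  have hCne : ∀ f, C f ≠ 0 := hloop C hC
  have hPmem : P ∈ star L X := by
    rw [← hstar]; exact ⟨hP, hCP.subset, subset_rfl⟩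
  have hCmem : C ∈ star L X := by
    rw [← hstar]; exact ⟨hC, subset_rfl, hCP.subset⟩
  have hXP : SignVec.le X P := hPmem.2
  have hXC : SignVec.le X C := hCmem.2
  refine ⟨fun f => ⟨?_, ?_⟩, hXP, hXC⟩
  · -- X f = 0 → f ∈ sep C P
    intro h0
    by_contra hf
    have hCf : C f = P f := by
      rcases st_aux1 (C f) (P f) (hCne f) (hPne f) with h | h
      · exact h
      · exact absurd ⟨h, hCne f⟩ hf
    have hnegP : (-P) ∈ L := hOM.neg_mem P hP.1
    have hY : SignVec.comp X (-P) ∈ L := hOM.comp_mem X hX _ hnegP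
    obtain ⟨T, hT, hYT⟩ := exists_tope_ge L _ hY
    have hXT : SignVec.le X T := fun g => by
      by_cases hg : X g = 0
      · exact Or.inl hg
      · have hYg : SignVec.comp X (-P) g = X g := by simp [SignVec.comp, hg]
        rcases hYT g with h | h
        · exact Or.inl (by rw [← hYg]; exact h)
        · exact Or.inr (by rw [← hYg, ← h, hYg])
    have hTmem : T ∈ intervalR L R C P := by rw [hstar]; exact ⟨hT, hXT⟩
    have hTf : T f = -P f := by
      have hYf : SignVec.comp X (-P) f = -P f := by simp [SignVec.comp, h0]
      rcases hYT f with h | h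
      · rw [hYf] at h; exact absurd h (st_aux5 _ (hPne f))
      · rw [← h, hYf]
    rcases st_aux1 (P f) (R f) (hPne f) (hRne f) with hpr | hpr
    · -- P f = R f : then f ∈ sep R T ⊆ sep R P, contradiction
      have hmem : f ∈ sep R T := by
        refine ⟨st_aux3 _ _ ?_, hRne f⟩
        rw [hTf, hpr]
      have h3 : R f = -P f := (hTmem.2.2 hmem).1
      rw [hpr] at h3
      exact hRne f (st_aux2 _ h3)
    · -- P f = -R f : then f ∈ sep R C ⊆ sep R T, contradiction
      have hmem : f ∈ sep R C := by
        refine ⟨st_aux3 _ _ ?_, hRne f⟩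
        rw [hCf, hpr]
      have hRT : R f = -T f := (hTmem.2.1 hmem).1
      have hTR : T f = R f := by rw [hTf, hpr, st_neg_neg]
      rw [hTR] at hRT
      exact hRne f (st_aux2 _ hRT)
  · -- f ∈ sep C P → X f = 0
    rintro ⟨hcp, -⟩
    by_contra h0
    have h1 : X f = C f := (hXC f).resolve_left h0
    have h2 : X f = P f := (hXP f).resolve_left h0
    have : P f = -P f := by
      calc P f = X f := h2.symm
        _ = C f := h1
        _ = -P f := hcp
    exact hPne f (st_aux2 _ this)

/-- Lemma 3.1 (i) and (ii). -/
theorem alpha_mem_W_and_monotone {E : Type*} [Fintype E] (L : Set (SignVec E))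
    (hOM : IsOrientedMatroid L) (hloop : Loopless L)
    (R P C X : SignVec E) (e : E) (hR : R ∈ Topes L) (hP : P ∈ Topes L) (hPe : P e = -R e)
    (hC : C ∈ Topes L) (hCe : C e = -R e) (hCP : sep R C ⊂ sep R P)
    (hX : X ∈ L) (hstar : intervalR L R C P = star L X) :
    ({f | X f = 0} = sep C P ∧ X ∈ Wset L R e P) ∧
    ∀ C' X' : SignVec E, C' ∈ Topes L → C' e = -R e → sep R C' ⊂ sep R P → X' ∈ L →
      intervalR L R C' P = star L X' → sep R C ⊆ sep R C' → SignVec.le X X' := by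
  have hRne : ∀ f, R f ≠ 0 := hloop R hR
  have hPne : ∀ f, P f ≠ 0 := hloop P hP
  have hCne : ∀ f, C f ≠ 0 := hloop C hC
  obtain ⟨hiff, hXP, hXC⟩ := main_aux L hOM hloop R P C X hR hP hC hCP hX hstar
  have he_nsep : e ∉ sep C P := by
    rintro ⟨hcp, -⟩
    have : P e = -P e := by
      calc P e = -R e := hPe
        _ = C e := hCe.symm
        _ = -P e := hcp
    exact hPne e (st_aux2 _ this)
  have hXe : X e ≠ 0 := fun h0 => he_nsep ((hiff e).1 h0)
  constructor
  · constructor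
    · ext f
      simp only [Set.mem_setOf_eq]
      exact hiff f
    · refine ⟨hX, ?_, hXP, ?_, ?_, ?_, ?_⟩
      · -- X ≠ 0
        intro h0
        exact hXe (by rw [h0]; rfl)
      · -- X ≠ P
        intro hXeqP
        have hPC : P = C := by
          funext f
          rcases hXC f with h | h
          · exact absurd (hXeqP ▸ h) (hPne f)
          · exact hXeqP ▸ h
        exact hCP.ne (by rw [hPC])
      · -- X e = -R e
        rw [(hXP e).resolve_left hXe, hPe]
      · -- off Sep(P,R), X agrees with P
        intro f hf
        have hpr : P f = R f := by
          rcases st_aux1 (P f) (R f) (hPne f) (hRne f) with h | h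
          · exact h
          · exact absurd ⟨h, hPne f⟩ hf
        have hfn : f ∉ sep C P := by
          rintro ⟨hcp, -⟩
          have hmem : f ∈ sep R C := by
            refine ⟨?_, hRne f⟩
            have : C f = -R f := by rw [hcp, hpr]
            exact st_aux3 _ _ this
          have h3 : R f = -P f := (hCP.subset hmem).1
          rw [hpr] at h3
          exact hRne f (st_aux2 _ h3)
        have hXf : X f ≠ 0 := fun h0 => hfn ((hiff f).1 h0)
        exact (hXP f).resolve_left hXf
      · intro f _ _
        exact hXP f
  · -- monotonicity
    intro C' X' hC' hC'e hC'P hX' hstar' hCC'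
    have hC'ne : ∀ f, C' f ≠ 0 := hloop C' hC'
    obtain ⟨hiff', hX'P, _⟩ := main_aux L hOM hloop R P C' X' hR hP hC' hC'P hX' hstar'
    intro f
    by_cases h0 : X f = 0
    · exact Or.inl h0
    · right
      have hfn : f ∉ sep C P := fun h => h0 ((hiff f).2 h)
      have hCf : C f = P f := by
        rcases st_aux1 (C f) (P f) (hCne f) (hPne f) with h | h
        · exact h
        · exact absurd ⟨h, hCne f⟩ hfn
      have hfn' : f ∉ sep C' P := by
        rintro ⟨hcp', -⟩
        rcases st_aux1 (P f) (R f) (hPne f) (hRne f) with hpr | hpr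
        · -- P f = R f : then f ∈ sep R C' ⊆ sep R P, contradiction
          have hmem : f ∈ sep R C' := by
            refine ⟨?_, hRne f⟩
            have : C' f = -R f := by rw [hcp', hpr]
            exact st_aux3 _ _ this
          have h3 : R f = -P f := (hC'P.subset hmem).1
          rw [hpr] at h3
          exact hRne f (st_aux2 _ h3)
        · -- P f = -R f : then f ∈ sep R C ⊆ sep R C', so C' f = -R f = P f
          have hmem : f ∈ sep R C := by
            refine ⟨?_, hRne f⟩
            have : C f = -R f := by rw [hCf, hpr]
            exact st_aux3 _ _ this
          have h2 := hCC' hmem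
          have hC'f : C' f = -R f := by
            have := h2.1
            exact st_aux3 _ _ this
          have : P f = -P f := by
            rw [← hpr] at hC'f
            rw [← hC'f] at hcp' ⊢
            exact hcp'
          exact hPne f (st_aux2 _ this)
      have hX'f : X' f ≠ 0 := fun h => hfn' ((hiff' f).1 h)
      rw [(hXP f).resolve_left h0, (hX'P f).resolve_left hX'f]
end

section
/- Let L be the covector set of an oriented matroid without loops on a finite set E such that the all-positive sign vector R (R_e = + for all e ∈ E) is a tope of L. Let S⁺,S⁻ ⊆ E be disjoint with S⁺ ∪ S⁻ ≠ ∅ and S⁺ ∪ S⁻ ≠ E, and let f ∈ E ∖ (S⁺ ∪ S⁻). Then for every tope T of L, the restriction T|_{E∖{f}} is a tope of the deletion L∖f, and the map π^f : T(S⁺,S⁻) → T^f(S⁺,S⁻), T ↦ T|_{E∖{f}}, is well defined. Moreover, for every Q ∈ T^f(S⁺,S⁻), the preimage {T ∈ T(S⁺,S⁻) : π^f(T) ⪯_{R|_{E∖{f}}} Q} equals the supertope T(Q⁺, S⁻) of L, where Q⁺ := {g ∈ E∖{f} : Q_g = +}. -/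
open Finset

/-- Restriction of a sign vector to the complement of a single element. -/
def restr {E : Type*} (f : E) (X : SignVec E) : SignVec {g : E // g ≠ f} :=
  fun g => X g.1

/-- The deletion `L ∖ f` of an element of the ground set. -/
def deletion {E : Type*} (L : Set (SignVec E)) (f : E) : Set (SignVec {g : E // g ≠ f}) :=
  restr f '' L

/-- Lemma 4.1: fibers of the restriction map between supertopes. -/
theorem fiber_of_deletion_is_supertope {E : Type*} [Fintype E] (L : Set (SignVec E))
    (hOM : IsOrientedMatroid L) (hloop : Loopless L)
    (hR : (fun _ => 1 : SignVec E) ∈ Topes L)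
    (Sp Sm : Set E) (hdisj : Disjoint Sp Sm) (hne : (Sp ∪ Sm).Nonempty)
    (hne' : Sp ∪ Sm ≠ Set.univ) (f : E) (hf : f ∉ Sp ∪ Sm) :
    (∀ T ∈ Topes L, restr f T ∈ Topes (deletion L f)) ∧
    (∀ T ∈ Topes L, (∀ g ∈ Sp, T g = 1) → (∀ g ∈ Sm, T g = -1) →
      restr f T ∈ Topes (deletion L f) ∧
      (∀ g : {g : E // g ≠ f}, g.1 ∈ Sp → restr f T g = 1) ∧
      (∀ g : {g : E // g ≠ f}, g.1 ∈ Sm → restr f T g = -1)) ∧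
    ∀ Q ∈ Topes (deletion L f),
      (∀ g : {g : E // g ≠ f}, g.1 ∈ Sp → Q g = 1) →
      (∀ g : {g : E // g ≠ f}, g.1 ∈ Sm → Q g = -1) →
      {T | T ∈ Topes L ∧ (∀ g ∈ Sp, T g = 1) ∧ (∀ g ∈ Sm, T g = -1) ∧
          sep (restr f (fun _ => 1)) (restr f T) ⊆ sep (restr f (fun _ => 1)) Q} =
      {T | T ∈ Topes L ∧ (∀ g : {g : E // g ≠ f}, Q g = 1 → T g.1 = 1) ∧
          ∀ g ∈ Sm, T g = -1} := by
  have tope_of_nz : ∀ {T : SignVec E}, T ∈ L → (∀ e, T e ≠ 0) → T ∈ Topes L := by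
    intro T hT hnz
    refine ⟨hT, fun X hX hle => ?_⟩
    funext e
    rcases hle e with h | h
    · exact absurd h (hnz e)
    · exact h.symm
  have part1 : ∀ T ∈ Topes L, restr f T ∈ Topes (deletion L f) := by
    intro T hT
    refine ⟨⟨T, hT.1, rfl⟩, fun X hX hle => ?_⟩
    funext g
    rcases hle g with h | h
    · exact absurd h (hloop T hT g.1)
    · exact h.symm
  refine ⟨part1, fun T hT hp hm => ⟨part1 T hT, fun g hg => hp g.1 hg, fun g hg => hm g.1 hg⟩,
    fun Q hQ hQp hQm => ?_⟩
  -- Q is nowhere zero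
  obtain ⟨⟨X, hXL, hXQ⟩, hQmax⟩ := hQ
  have hY : SignVec.comp X (fun _ => 1) ∈ L := hOM.comp_mem X hXL _ hR.1
  have hle : SignVec.le Q (restr f (SignVec.comp X fun _ => 1)) := by
    intro g
    by_cases h : X g.1 = 0
    · left; rw [← hXQ]; exact h
    · right; rw [← hXQ]; simp [restr, SignVec.comp, h]
  have hEq : restr f (SignVec.comp X fun _ => 1) = Q := hQmax _ ⟨_, hY, rfl⟩ hle
  have hQnz : ∀ g : {g : E // g ≠ f}, Q g ≠ 0 := by
    intro g
    rw [← hEq]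
    simp only [restr, SignVec.comp]
    by_cases h : X g.1 = 0 <;> simp [h]
  have hsep : ∀ (T : SignVec E) (g : {g : E // g ≠ f}),
      g ∈ sep (restr f (fun _ => 1)) (restr f T) ↔ T g.1 = -1 := by
    intro T g
    simp only [sep, Set.mem_setOf_eq, restr]
    constructor
    · rintro ⟨h, -⟩
      cases hx : T g.1 <;> simp [hx] at h ⊢
    · intro h; rw [h]; exact ⟨rfl, by decide⟩
  have hsepQ : ∀ g : {g : E // g ≠ f},
      g ∈ sep (restr f (fun _ => 1)) Q ↔ Q g = -1 := by
    intro g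
    simp only [sep, Set.mem_setOf_eq, restr]
    constructor
    · rintro ⟨h, -⟩
      cases hx : Q g <;> simp [hx] at h ⊢
    · intro h; rw [h]; exact ⟨rfl, by decide⟩
  ext T
  simp only [Set.mem_setOf_eq]
  constructor
  · rintro ⟨hT, hTp, hTm, hsub⟩
    refine ⟨hT, fun g hg => ?_, hTm⟩
    cases hx : T g.1 with
    | zero => exact absurd hx (hloop T hT g.1)
    | neg =>
      have : Q g = -1 := (hsepQ g).1 (hsub ((hsep T g).2 hx))
      rw [hg] at this; exact absurd this (by decide)
    | pos => rfl
  · rintro ⟨hT, hTQ, hTm⟩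
    refine ⟨hT, fun g hg => ?_, hTm, fun g hg => ?_⟩
    · have hgf : g ≠ f := fun h => hf (h ▸ Or.inl hg)
      exact hTQ ⟨g, hgf⟩ (hQp ⟨g, hgf⟩ hg)
    · have hTg : T g.1 = -1 := (hsep T g).1 hg
      rw [hsepQ]
      cases hx : Q g with
      | zero => exact absurd hx (hQnz g)
      | neg => rfl
      | pos =>
        have := hTQ g hx
        rw [hTg] at this; exact absurd this (by decide)
end

section
/- Let L be the covector set of an oriented matroid without loops on a finite linearly ordered set E, and let e ∈ E. Let F,F' ∈ L with F_e = F'_e = 0, and let R ∈ T^{F,e} and Q ∈ T^{F',e} with Q ≠ R. If the entry 𝓜^e_{Q,R} is nonzero, then F ≤ F' in the componentwise order on covectors. Consequently, every off-diagonal entry of 𝓜^e indexed by topes from blocks T^{F,e}, T^{F',e} with F ≰ F' vanishes, so that 𝓜^e is block lower triangular with diagonal blocks M^{F,e} with respect to any ordering of T that lists the blocks T^{F,e} consecutively, compatibly with a linear extension of the componentwise order on {F ∈ L : F_e = 0}. -/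
open Finset

section AuxBT

open scoped Classical

lemma signType_ne_cases {x y : SignType} (hx : x ≠ 0) (hy : y ≠ 0) (h : x ≠ y) : x = -y := by
  cases x <;> cases y <;> revert hx hy h <;> decide

lemma signType_eq_neg_self {x : SignType} : x = -x → x = 0 := by
  cases x <;> decide

lemma signType_neg_eq_zero {x : SignType} : -x = 0 → x = 0 := by
  cases x <;> decide

lemma neg_tope_mem {E : Type*} {L : Set (SignVec E)} (hOM : IsOrientedMatroid L)
    {T : SignVec E} (hT : T ∈ Topes L) : -T ∈ Topes L := by
  refine ⟨hOM.neg_mem T hT.1, fun X hX hle => ?_⟩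
  have hle' : SignVec.le T (-X) := by
    intro f
    rcases hle f with h | h
    · left
      have h' : -(T f) = 0 := h
      exact signType_neg_eq_zero h'
    · right
      have h' : -(T f) = X f := h
      show T f = -(X f)
      rw [← h', neg_neg]
  have hXT := hT.2 (-X) (hOM.neg_mem X hX) hle'
  rw [← hXT, neg_neg]

lemma negSV_le {E : Type*} {X Y : SignVec E} (h : SignVec.le X Y) :
    SignVec.le (-X) (-Y) := by
  intro f
  rcases h f with h0 | h1
  · left
    show -(X f) = 0
    rw [h0, neg_zero]
  · right
    show -(X f) = -(Y f)
    rw [h1]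

lemma sep_inj_topes {E : Type*} {L : Set (SignVec E)} (hloop : Loopless L)
    {R Q Q' : SignVec E} (hR : R ∈ Topes L) (hQ : Q ∈ Topes L) (hQ' : Q' ∈ Topes L)
    (h : sep R Q = sep R Q') : Q = Q' := by
  funext f
  by_cases hf : f ∈ sep R Q
  · have hf' : f ∈ sep R Q' := h ▸ hf
    have h1 : R f = -(Q f) := hf.1
    have h2 : R f = -(Q' f) := hf'.1
    exact neg_injective (h1.symm.trans h2)
  · have hf' : f ∉ sep R Q' := fun hx => hf (h ▸ hx)
    have hRnz : R f ≠ 0 := hloop R hR f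
    have hQnz : Q f ≠ 0 := hloop Q hQ f
    have hQ'nz : Q' f ≠ 0 := hloop Q' hQ' f
    have h1 : Q f = R f := by
      by_contra hc
      exact hf ⟨(signType_ne_cases hRnz hQnz (fun hh => hc hh.symm)), hRnz⟩
    have h2 : Q' f = R f := by
      by_contra hc
      exact hf' ⟨(signType_ne_cases hRnz hQ'nz (fun hh => hc hh.symm)), hRnz⟩
    rw [h1, h2]

/-- Key vanishing lemma: if `F ∈ L` with `F ≤ R`, `F e = 0`, and a tope `Q` with
`Q e = -R e` has its separator from `R` not contained in the zero set of `F`,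
then `μ(0̂, Q) = 0` in the poset `T_{R,e}`. -/
lemma muVanish {E : Type*} [Fintype E] {L : Set (SignVec E)}
    (hOM : IsOrientedMatroid L) (hloop : Loopless L)
    {e : E} {μ : SignVec E → SignVec E → ℤ} (hμ : IsMoebius L e μ)
    {F R : SignVec E} (hF : F ∈ L) (hR : R ∈ Topes L)
    (hFR : SignVec.le F R) (hFe : F e = 0) :
    ∀ Q ∈ Topes L, Q e = -R e → ¬ (sep R Q ⊆ {f | F f = 0}) → μ Q R = 0 := by
  suffices h : ∀ n : ℕ, ∀ Q ∈ Topes L, Q e = -R e →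
      (Finset.univ.filter (fun f => f ∈ sep R Q)).card ≤ n →
      ¬ (sep R Q ⊆ {f | F f = 0}) → μ Q R = 0 by
    intro Q hQ hQe hbad
    exact h _ Q hQ hQe le_rfl hbad
  intro n
  induction n with
  | zero =>
    intro Q hQ hQe hcard hbad
    exfalso
    apply hbad
    intro f hf
    exfalso
    have hmem : f ∈ Finset.univ.filter (fun f => f ∈ sep R Q) :=
      Finset.mem_filter.2 ⟨Finset.mem_univ f, hf⟩
    have := Finset.card_pos.2 ⟨f, hmem⟩
    omega
  | succ n ih =>
    intro Q hQ hQe hcard hbad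
    have hQL : Q ∈ L := hQ.1
    have hQnz : ∀ f, Q f ≠ 0 := hloop Q hQ
    have hRnz : ∀ f, R f ≠ 0 := hloop R hR
    -- the composed tope Q* = F ∘ Q
    have hQsL : SignVec.comp F Q ∈ L := hOM.comp_mem F hF Q hQL
    have hQsnz : ∀ f, SignVec.comp F Q f ≠ 0 := by
      intro f
      by_cases h : F f = 0
      · simpa [SignVec.comp, h] using hQnz f
      · simpa [SignVec.comp, h] using h
    have hQsT : SignVec.comp F Q ∈ Topes L := by
      refine ⟨hQsL, fun X hX hle => ?_⟩
      funext f
      rcases hle f with h | h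
      · exact absurd h (hQsnz f)
      · exact h.symm
    have hQse : SignVec.comp F Q e = -R e := by
      have h1 : SignVec.comp F Q e = Q e := by simp [SignVec.comp, hFe]
      rw [h1, hQe]
    have hsepQs : sep R (SignVec.comp F Q) = sep R Q ∩ {f | F f = 0} := by
      ext f
      by_cases h : F f = 0
      · have h1 : SignVec.comp F Q f = Q f := by simp [SignVec.comp, h]
        constructor
        · rintro ⟨ha, hb⟩
          rw [h1] at ha
          exact ⟨⟨ha, hb⟩, h⟩
        · rintro ⟨⟨ha, hb⟩, -⟩
          exact ⟨by rw [h1]; exact ha, hb⟩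
      · have hFf : F f = R f := (hFR f).resolve_left h
        have h1 : SignVec.comp F Q f = R f := by
          show (if F f = 0 then Q f else F f) = R f
          rw [if_neg h, hFf]
        constructor
        · rintro ⟨ha, hb⟩
          rw [h1] at ha
          exact absurd (signType_eq_neg_self ha) hb
        · rintro ⟨-, hb⟩
          exact absurd hb h
    -- the two Möbius recursions
    have h1 := hμ R hR Q hQ hQe
    have h2 := hμ R hR (SignVec.comp F Q) hQsT hQse
    set s := Finset.univ.filter
      (fun Q' : SignVec E => Q' ∈ Topes L ∧ Q' e = -R e ∧ sep R Q' ⊆ sep R Q) with hs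
    set t := Finset.univ.filter
      (fun Q' : SignVec E => Q' ∈ Topes L ∧ Q' e = -R e ∧
        sep R Q' ⊆ sep R (SignVec.comp F Q)) with ht
    have hts : t ⊆ s := by
      intro x hx
      rw [ht, Finset.mem_filter] at hx
      rw [hs, Finset.mem_filter]
      refine ⟨hx.1, hx.2.1, hx.2.2.1, hx.2.2.2.trans ?_⟩
      rw [hsepQs]
      exact Set.inter_subset_left
    have hsd := Finset.sum_sdiff (f := fun x => μ x R) hts
    have hsum : ∑ x ∈ s \ t, μ x R = 0 := by linarith
    have hQmem : Q ∈ s \ t := by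
      refine Finset.mem_sdiff.2 ⟨?_, ?_⟩
      · rw [hs, Finset.mem_filter]
        exact ⟨Finset.mem_univ _, hQ, hQe, subset_rfl⟩
      · intro hmem
        rw [ht, Finset.mem_filter] at hmem
        apply hbad
        intro f hf
        exact ((hsepQs ▸ hmem.2.2.2) hf).2
    have hfinal : ∑ x ∈ s \ t, μ x R = μ Q R := by
      apply Finset.sum_eq_single_of_mem Q hQmem
      intro x hx hne
      rw [Finset.mem_sdiff] at hx
      obtain ⟨hxs, hxt⟩ := hx
      rw [hs, Finset.mem_filter] at hxs
      obtain ⟨-, hxT, hxe, hxsub⟩ := hxs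
      have hxbad : ¬ sep R x ⊆ {f | F f = 0} := by
        intro hsub
        apply hxt
        rw [ht, Finset.mem_filter]
        refine ⟨Finset.mem_univ _, hxT, hxe, ?_⟩
        rw [hsepQs]
        exact Set.subset_inter hxsub hsub
      apply ih x hxT hxe ?_ hxbad
      have hssub : Finset.univ.filter (fun f => f ∈ sep R x) ⊂
          Finset.univ.filter (fun f => f ∈ sep R Q) := by
        rw [Finset.ssubset_iff_subset_ne]
        constructor
        · intro f hf
          rw [Finset.mem_filter] at hf ⊢
          exact ⟨hf.1, hxsub hf.2⟩
        · intro heq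
          apply hne
          apply sep_inj_topes hloop hR hxT hQ
          ext f
          constructor
          · intro hf
            exact hxsub hf
          · intro hf
            have : f ∈ Finset.univ.filter (fun f => f ∈ sep R x) := by
              rw [heq, Finset.mem_filter]
              exact ⟨Finset.mem_univ f, hf⟩
            exact (Finset.mem_filter.1 this).2
      have := Finset.card_lt_card hssub
      omega
    exact hfinal.symm.trans hsum

end AuxBT

open scoped Classical in
/-- Lemma 5.7: block triangularity of `𝓜^e`. -/
theorem mMatrix_block_triangular {E : Type*} [Fintype E] [LinearOrder E]
    (K : Type*) [Field K] (L : Set (SignVec E))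
    (hOM : IsOrientedMatroid L) (hloop : Loopless L)
    (e : E) (μ : SignVec E → SignVec E → ℤ) (hμ : IsMoebius L e μ)
    (F F' : SignVec E) (hF : F ∈ L) (hF' : F' ∈ L) (hFe : F e = 0) (hF'e : F' e = 0)
    (R Q : SignVec E) (hR : R ∈ TFe L F e) (hQ : Q ∈ TFe L F' e) (hQR : Q ≠ R) :
    ((mEntry K μ e Q R : MvPolynomial E K) ≠ 0 → SignVec.le F F') ∧
    (¬ SignVec.le F F' → (mEntry K μ e Q R : MvPolynomial E K) = 0) := by
  classical
  obtain ⟨hQT, hF'L, hF'Q, hF'e2, hQmax⟩ := hQ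
  obtain ⟨hRT, hFL, hFR, hFe2, hRmax⟩ := hR
  have hmain : (mEntry K μ e Q R : MvPolynomial E K) ≠ 0 → SignVec.le F F' := by
    intro h
    have hsep : sep R Q ⊆ {f | F f = 0} := by
      rw [mEntry, if_neg hQR] at h
      by_cases h1 : Q e = -1 ∧ R e = 1 ∧ maxSep e Q R
      · rw [if_pos h1] at h
        have hμne : μ Q R ≠ 0 := by
          intro hz
          rw [hz] at h
          simp at h
        have hQe : Q e = -R e := by rw [h1.1, h1.2.1]
        by_contra hc
        exact hμne (muVanish hOM hloop hμ hF hRT hFR hFe Q hQT hQe hc)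
      · rw [if_neg h1] at h
        by_cases h2 : Q e = 1 ∧ R e = -1 ∧ maxSep e Q R
        · rw [if_pos h2] at h
          have hμne : μ (-Q) (-R) ≠ 0 := by
            intro hz
            rw [hz] at h
            simp at h
          have hnR : -R ∈ Topes L := neg_tope_mem hOM hRT
          have hnQ : -Q ∈ Topes L := neg_tope_mem hOM hQT
          have hnF : -F ∈ L := hOM.neg_mem F hF
          have hnFR : SignVec.le (-F) (-R) := negSV_le hFR
          have hnFe : (-F) e = 0 := by
            show -(F e) = 0
            rw [hFe, neg_zero]
          have hnQe : (-Q) e = -(-R) e := by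
            show -(Q e) = -(-(R e))
            rw [h2.1, h2.2.1]
            decide
          have hsub : sep (-R) (-Q) ⊆ {f | (-F) f = 0} := by
            by_contra hc
            exact hμne (muVanish hOM hloop hμ hnF hnR hnFR hnFe (-Q) hnQ hnQe hc)
          intro f hf
          obtain ⟨ha, hb⟩ := hf
          have hf' : f ∈ sep (-R) (-Q) := by
            refine ⟨?_, ?_⟩
            · show -(R f) = -(-(Q f))
              rw [ha]
            · show -(R f) ≠ 0
              intro hx
              exact hb (signType_neg_eq_zero hx)
          have := hsub hf'
          have h0 : -(F f) = 0 := this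
          exact signType_neg_eq_zero h0
        · rw [if_neg h2] at h
          exact absurd rfl h
    have hFQ : SignVec.le F Q := by
      intro f
      rcases hFR f with h0 | hfr
      · exact Or.inl h0
      · by_cases hq : Q f = R f
        · exact Or.inr (hfr.trans hq.symm)
        · have hRnz : R f ≠ 0 := hloop R hRT f
          have hQnz : Q f ≠ 0 := hloop Q hQT f
          have hm : f ∈ sep R Q :=
            ⟨signType_ne_cases hRnz hQnz (fun hh => hq hh.symm), hRnz⟩
          exact Or.inl (hsep hm)
    exact hQmax F hF hFQ hFe
  exact ⟨hmain, fun hn => not_not.1 (fun hne => hn (hmain hne))⟩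
end
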